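/- Let n be a positive integer, let ν > 0 be a real number, let W be an n×n real symmetric matrix with tr W > 0, and let R be any n×n real symmetric matrix. Then the function h(t) := (σ₂(W + tR) − ν)/tr(W + tR) is twice differentiable at t = 0 and h''(0) ≤ − 2ν (tr R)² / (tr W)³. -/

import Mathlib

open Matrix

/-- σ₂ of a matrix: `((tr W)² − tr(W²))/2`. -/
noncomputable def sigma2 {n : ℕ} (W : Matrix (Fin n) (Fin n) ℝ) : ℝ :=
  ((W.trace) ^ 2 - (W * W).trace) / 2

lemma trace_sq_nonneg {n : ℕ} (M : Matrix (Fin n) (Fin n) ℝ) (hM : M.IsSymm) :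
    0 ≤ (M * M).trace := by
  have h1 : M * M = Mᵀ * M := by rw [hM]
  have h2 : (Mᵀ * M).trace = ∑ i, ∑ j, (M j i) ^ 2 := by
    simp [Matrix.trace, Matrix.mul_apply, Matrix.diag, sq]
  rw [h1, h2]
  positivity

lemma aux_calc (a b p q r ν : ℝ) (ha : 0 < a) (key : 0 ≤ a^2*r - 2*a*b*q + b^2*p) :
    (∀ᶠ t in nhds (0:ℝ), DifferentiableAt ℝ
        (fun t : ℝ => (((a + b*t)^2 - (p + 2*q*t + r*t^2))/2 - ν) / (a + b*t)) t) ∧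
    DifferentiableAt ℝ
      (deriv (fun t : ℝ => (((a + b*t)^2 - (p + 2*q*t + r*t^2))/2 - ν) / (a + b*t))) 0 ∧
    deriv (deriv (fun t : ℝ => (((a + b*t)^2 - (p + 2*q*t + r*t^2))/2 - ν) / (a + b*t))) 0
      ≤ -(2 * ν * b^2) / a^3 := by
  have hD : ∀ t : ℝ, HasDerivAt (fun t : ℝ => a + b*t) b t := by
    intro t
    simpa using ((hasDerivAt_id t).const_mul b).const_add a
  have hN : ∀ t : ℝ, HasDerivAt (fun t : ℝ => ((a + b*t)^2 - (p + 2*q*t + r*t^2))/2 - ν)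
      (b*(a+b*t) - (q + r*t)) t := by
    intro t
    have h1 : HasDerivAt (fun t : ℝ => (a + b*t)^2) (2*(a+b*t)*b) t := by
      simpa using (hD t).fun_pow 2
    have h2 : HasDerivAt (fun t : ℝ => p + 2*q*t + r*t^2) (2*q + r*(2*t)) t := by
      have := (((hasDerivAt_id t).const_mul (2*q)).const_add p).fun_add
        (((hasDerivAt_pow 2 t)).const_mul r)
      simpa using this.congr_deriv (by ring)
    have := ((h1.sub h2).div_const 2).sub_const ν
    exact this.congr_deriv (by ring)
  have hne : ∀ᶠ t in nhds (0:ℝ), a + b*t ≠ 0 := by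
    have hc : ContinuousAt (fun t : ℝ => a + b*t) 0 := by fun_prop
    have : a + b*0 ≠ 0 := by simpa using ha.ne'
    exact hc.eventually_ne this
  have hdiff : ∀ t : ℝ, a + b*t ≠ 0 →
      HasDerivAt (fun t : ℝ => (((a + b*t)^2 - (p + 2*q*t + r*t^2))/2 - ν) / (a + b*t))
      (((b*(a+b*t) - (q + r*t)) * (a+b*t)
        - (((a + b*t)^2 - (p + 2*q*t + r*t^2))/2 - ν) * b) / (a+b*t)^2) t :=
    fun t ht => (hN t).div (hD t) ht
  have hev : deriv (fun t : ℝ => (((a + b*t)^2 - (p + 2*q*t + r*t^2))/2 - ν) / (a + b*t))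
      =ᶠ[nhds (0:ℝ)] fun t : ℝ => ((b*(a+b*t) - (q + r*t)) * (a+b*t)
        - (((a + b*t)^2 - (p + 2*q*t + r*t^2))/2 - ν) * b) / (a+b*t)^2 :=
    hne.mono fun t ht => (hdiff t ht).deriv
  -- derivative of the derivative at 0
  have hnum : HasDerivAt (fun t : ℝ => (b*(a+b*t) - (q + r*t)) * (a+b*t)
        - (((a + b*t)^2 - (p + 2*q*t + r*t^2))/2 - ν) * b)
      ((b*b - r) * (a + b*0) + (b*(a+b*0) - (q + r*0)) * b
        - (b*(a+b*0) - (q + r*0)) * b) 0 := by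
    have h1 : HasDerivAt (fun t : ℝ => b*(a+b*t) - (q + r*t)) (b*b - r) 0 := by
      have := ((hD 0).const_mul b).sub (((hasDerivAt_id (0:ℝ)).const_mul r).const_add q)
      exact this.congr_deriv (by ring)
    exact (h1.mul (hD 0)).sub ((hN 0).mul_const b)
  have hden : HasDerivAt (fun t : ℝ => (a+b*t)^2) (2*(a+b*0)*b) 0 := by
    simpa using (hD 0).fun_pow 2
  have hden0 : ((a + b*0)^2 : ℝ) ≠ 0 := by
    simpa using pow_ne_zero 2 ha.ne'
  have hg1 : HasDerivAt (fun t : ℝ => ((b*(a+b*t) - (q + r*t)) * (a+b*t)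
        - (((a + b*t)^2 - (p + 2*q*t + r*t^2))/2 - ν) * b) / (a+b*t)^2)
      ((((b*b - r) * (a + b*0) + (b*(a+b*0) - (q + r*0)) * b
          - (b*(a+b*0) - (q + r*0)) * b) * (a+b*0)^2
        - ((b*(a+b*0) - (q + r*0)) * (a+b*0)
          - (((a + b*0)^2 - (p + 2*q*0 + r*0^2))/2 - ν) * b) * (2*(a+b*0)*b))
        / ((a+b*0)^2)^2) 0 :=
    hnum.div hden hden0
  refine ⟨hne.mono fun t ht => (hdiff t ht).differentiableAt, ?_, ?_⟩
  · exact (hev.differentiableAt_iff).mpr hg1.differentiableAt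
  · rw [hev.deriv_eq, hg1.deriv]
    have hval : (((b*b - r) * (a + b*0) + (b*(a+b*0) - (q + r*0)) * b
          - (b*(a+b*0) - (q + r*0)) * b) * (a+b*0)^2
        - ((b*(a+b*0) - (q + r*0)) * (a+b*0)
          - (((a + b*0)^2 - (p + 2*q*0 + r*0^2))/2 - ν) * b) * (2*(a+b*0)*b))
        / ((a+b*0)^2)^2
        = -(2 * ν * b^2) / a^3 - (a^2*r - 2*a*b*q + b^2*p) / a^3 := by
      have ha0 : a ≠ 0 := ha.ne'
      simp only [mul_zero, add_zero]
      field_simp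
      ring
    rw [hval]
    have : 0 ≤ (a^2*r - 2*a*b*q + b^2*p) / a^3 := by positivity
    linarith

/-- For `ν > 0`, symmetric `W` with `tr W > 0` and symmetric `R`, the function
`h(t) = (σ₂(W + tR) − ν)/tr(W + tR)` is twice differentiable at `t = 0` and
`h''(0) ≤ − 2ν (tr R)² / (tr W)³`. -/
theorem stmt3 (n : ℕ) (hn : 0 < n) (ν : ℝ) (hν : 0 < ν)
    (W R : Matrix (Fin n) (Fin n) ℝ)
    (hWsymm : W.IsSymm) (hRsymm : R.IsSymm) (htr : 0 < W.trace) :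
    (∀ᶠ t in nhds (0 : ℝ),
        DifferentiableAt ℝ (fun t : ℝ => (sigma2 (W + t • R) - ν) / (W + t • R).trace) t) ∧
      DifferentiableAt ℝ
        (deriv (fun t : ℝ => (sigma2 (W + t • R) - ν) / (W + t • R).trace)) 0 ∧
      deriv (deriv (fun t : ℝ => (sigma2 (W + t • R) - ν) / (W + t • R).trace)) 0
        ≤ -(2 * ν * (R.trace) ^ 2) / (W.trace) ^ 3 := by
  have hfun : (fun t : ℝ => (sigma2 (W + t • R) - ν) / (W + t • R).trace)
      = fun t : ℝ => (((W.trace + R.trace*t)^2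
          - ((W*W).trace + 2*(W*R).trace*t + (R*R).trace*t^2))/2 - ν)
        / (W.trace + R.trace*t) := by
    funext t
    have htr' : (W + t • R).trace = W.trace + R.trace * t := by
      simp [Matrix.trace_add, Matrix.trace_smul, smul_eq_mul]; ring
    have hsq : ((W + t • R) * (W + t • R)).trace
        = (W*W).trace + 2*(W*R).trace*t + (R*R).trace*t^2 := by
      simp [add_mul, mul_add, Matrix.trace_add, Matrix.smul_mul, Matrix.mul_smul,
        Matrix.trace_smul, smul_eq_mul, Matrix.trace_mul_comm R W]
      ring
    rw [sigma2, htr', hsq]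
  have key : 0 ≤ W.trace^2*(R*R).trace - 2*W.trace*R.trace*(W*R).trace
      + R.trace^2*(W*W).trace := by
    have hM : (W.trace • R - R.trace • W).IsSymm := by
      unfold Matrix.IsSymm at *
      simp [Matrix.transpose_sub, Matrix.transpose_smul, hWsymm, hRsymm]
    have h0 := trace_sq_nonneg (W.trace • R - R.trace • W) hM
    have hexp : ((W.trace • R - R.trace • W) * (W.trace • R - R.trace • W)).trace
        = W.trace^2*(R*R).trace - 2*W.trace*R.trace*(W*R).trace
          + R.trace^2*(W*W).trace := by
      simp [sub_mul, mul_sub, Matrix.trace_sub, Matrix.smul_mul, Matrix.mul_smul,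
        Matrix.trace_smul, smul_eq_mul, Matrix.trace_mul_comm R W]
      ring
    rw [hexp] at h0
    exact h0
  rw [hfun]
  exact aux_calc W.trace R.trace (W*W).trace (W*R).trace (R*R).trace ν htr key
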